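/- There exists a universal constant c > 0 such that for every ρ ∈ (0,1) and every positive integer n, the set Θ = { (x, y) ∈ ℝⁿ × ℝⁿ : |x| ≤ 1, |y| ≤ ρ, |x + y| ≤ (1 + ρ²)^{1/2} } satisfies λ(Θ) ≤ (1 − c·min{ρ√n, 1})·λ(Bⁿ)·λ(ρBⁿ), where |·| denotes the Euclidean norm. -/

import Mathlib

open MeasureTheory ENNReal Pointwise

noncomputable section

abbrev Euc (n : ℕ) := EuclideanSpace ℝ (Fin n)

/-- the product splitting map -/
def splitMap (m : ℕ) : Euc (m+1) ≃ᵐ ℝ × (Fin m → ℝ) :=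
  (MeasurableEquiv.toLp 2 (Fin (m+1) → ℝ)).symm.trans
    (MeasurableEquiv.piFinSuccAbove (fun _ => ℝ) 0)

lemma splitMap_preserving (m : ℕ) : MeasurePreserving (splitMap m) volume volume :=
  (volume_preserving_piFinSuccAbove (fun _ => ℝ) 0).comp
    (EuclideanSpace.volume_preserving_symm_measurableEquiv_toLp (Fin (m+1)))

lemma splitMap_apply (m : ℕ) (y : Euc (m+1)) :
    splitMap m y = (y 0, fun i => y (Fin.succ i)) := by
  rfl

lemma euc_norm_sq (m : ℕ) (y : Euc (m+1)) :
    ‖y‖^2 = (y 0)^2 + ∑ i : Fin m, (y (Fin.succ i))^2 := by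
  rw [EuclideanSpace.norm_eq, Real.sq_sqrt (by positivity)]
  rw [Fin.sum_univ_succ]
  simp [sq_abs]

/-- pi-space version of the closed ball -/
def piBall (m : ℕ) (r : ℝ) : Set (Fin m → ℝ) := {z | ∑ i, (z i)^2 ≤ r^2}

lemma piBall_measurable (m : ℕ) (r : ℝ) : MeasurableSet (piBall m r) :=
  measurableSet_le (by fun_prop) measurable_const

lemma volume_piBall (m : ℕ) {r : ℝ} (hr : 0 ≤ r) :
    volume (piBall m r) = volume (Metric.closedBall (0 : Euc m) r) := by
  have h := (EuclideanSpace.volume_preserving_symm_measurableEquiv_toLp (Fin m)).measure_preimage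
    (piBall_measurable m r).nullMeasurableSet
  rw [← h]
  congr 1
  ext y
  simp only [Set.mem_preimage, piBall, Set.mem_setOf_eq, Metric.mem_closedBall,
    dist_zero_right]
  rw [EuclideanSpace.norm_eq]
  constructor
  · intro hy
    have : ∀ i, ((MeasurableEquiv.toLp 2 (Fin m → ℝ)).symm y) i = y i := fun i => rfl
    rw [show (∑ i, ((MeasurableEquiv.toLp 2 (Fin m → ℝ)).symm y i)^2) = ∑ i, ‖y i‖^2 by
      simp [this, sq_abs]] at hy
    calc Real.sqrt (∑ i, ‖y i‖^2) ≤ Real.sqrt (r^2) := Real.sqrt_le_sqrt hy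
    _ = r := Real.sqrt_sq hr
  · intro hy
    have : ∀ i, ((MeasurableEquiv.toLp 2 (Fin m → ℝ)).symm y) i = y i := fun i => rfl
    rw [show (∑ i, ((MeasurableEquiv.toLp 2 (Fin m → ℝ)).symm y i)^2) = ∑ i, ‖y i‖^2 by
      simp [this, sq_abs]]
    calc (∑ i, ‖y i‖^2) = Real.sqrt (∑ i, ‖y i‖^2) ^ 2 := (Real.sq_sqrt (by positivity)).symm
    _ ≤ r ^ 2 := by
        apply pow_le_pow_left₀ (Real.sqrt_nonneg _) hy

lemma euc_prod_volume (m : ℕ) (s : Set ℝ) (t : Set (Fin m → ℝ))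
    (hs : MeasurableSet s) (ht : MeasurableSet t) :
    volume {y : Euc (m+1) | y 0 ∈ s ∧ (fun i => y (Fin.succ i)) ∈ t}
      = volume s * volume t := by
  have hst : MeasurableSet (s ×ˢ t) := hs.prod ht
  have h := (splitMap_preserving m).measure_preimage hst.nullMeasurableSet
  have hset : {y : Euc (m+1) | y 0 ∈ s ∧ (fun i => y (Fin.succ i)) ∈ t}
      = (splitMap m) ⁻¹' (s ×ˢ t) := by
    ext y
    simp [splitMap_apply, Set.mem_prod]
  rw [hset, h, ← Measure.prod_prod, ← Measure.volume_eq_prod]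

lemma slab_bound (m : ℕ) {u : ℝ} (hu : 0 ≤ u) :
    volume {y : Euc (m+1) | ‖y‖ ≤ 1 ∧ 0 ≤ y 0 ∧ y 0 ≤ u}
      ≤ ENNReal.ofReal u * volume (Metric.closedBall (0 : Euc m) 1) := by
  have hsub : {y : Euc (m+1) | ‖y‖ ≤ 1 ∧ 0 ≤ y 0 ∧ y 0 ≤ u}
      ⊆ {y : Euc (m+1) | y 0 ∈ Set.Icc 0 u ∧ (fun i => y (Fin.succ i)) ∈ piBall m 1} := by
    intro y ⟨h1, h2, h3⟩
    refine ⟨⟨h2, h3⟩, ?_⟩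
    have hn := euc_norm_sq m y
    have : ‖y‖^2 ≤ 1 := by nlinarith [norm_nonneg y]
    simp only [piBall, Set.mem_setOf_eq]
    nlinarith [sq_nonneg (y 0)]
  calc volume {y : Euc (m+1) | ‖y‖ ≤ 1 ∧ 0 ≤ y 0 ∧ y 0 ≤ u}
      ≤ volume {y : Euc (m+1) | y 0 ∈ Set.Icc 0 u ∧ (fun i => y (Fin.succ i)) ∈ piBall m 1} :=
        measure_mono hsub
    _ = volume (Set.Icc 0 u) * volume (piBall m 1) :=
        euc_prod_volume m _ _ measurableSet_Icc (piBall_measurable m 1)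
    _ = ENNReal.ofReal u * volume (Metric.closedBall (0 : Euc m) 1) := by
        rw [Real.volume_Icc, volume_piBall m (by norm_num), sub_zero]

lemma aux_pow (m : ℕ) : (1/4 : ℝ) ≤ (1 - 1/(m+1))^m := by
  rcases Nat.eq_zero_or_pos m with hm | hm
  · subst hm; norm_num
  · have hm' : (0:ℝ) < m := by exact_mod_cast hm
    have h1 : Real.exp (1/m) ≥ 1 + 1/m := by
      have := Real.add_one_le_exp (1/(m:ℝ))
      linarith
    have h2 : Real.exp (-(1/m)) ≤ 1 - 1/(m+1) := by
      rw [Real.exp_neg]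
      have hpos : (0:ℝ) < 1 - 1/(m+1) := by
        have : (1:ℝ)/(m+1) < 1 := by
          rw [div_lt_one (by positivity)]; linarith
        linarith
      rw [inv_le_comm₀ (Real.exp_pos _) hpos]
      calc (1 - 1/(m+1) : ℝ)⁻¹ = (m+1)/m := by
            field_simp
            rw [add_sub_cancel_right, div_self hm'.ne']
          _ = 1 + 1/m := by field_simp
          _ ≤ Real.exp (1/m) := by linarith
    calc (1/4 : ℝ) ≤ Real.exp (-1) := by
          rw [Real.exp_neg, inv_eq_one_div]
          rw [div_le_div_iff₀ (by norm_num) (Real.exp_pos _)]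
          have := Real.exp_one_lt_d9
          linarith
      _ = Real.exp (-(1/m)) ^ m := by
          rw [← Real.exp_nat_mul]
          congr 1
          field_simp
      _ ≤ (1 - 1/(m+1))^m := by
          apply pow_le_pow_left₀ (Real.exp_pos _).le h2

lemma ball_ratio (m : ℕ) :
    ENNReal.ofReal (1 / Real.sqrt (m+1)) * volume (Metric.closedBall (0 : Euc m) 1)
      ≤ volume (Metric.closedBall (0 : Euc (m+1)) 1) := by
  set a : ℝ := 1 / Real.sqrt (m+1) with ha
  have hsq : Real.sqrt (m+1) > 0 := Real.sqrt_pos.2 (by positivity)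
  have ha0 : 0 < a := by positivity
  have ha1 : a ≤ 1 := by
    rw [ha, div_le_one hsq]
    nlinarith [Real.sq_sqrt (show (0:ℝ) ≤ (m:ℝ)+1 by positivity), Nat.cast_nonneg (α := ℝ) m]
  have haa : a^2 = 1/(m+1) := by
    rw [ha, div_pow, one_pow, Real.sq_sqrt (by positivity)]
  set b : ℝ := Real.sqrt (1 - a^2) with hb
  have hb0 : 0 ≤ b := Real.sqrt_nonneg _
  have hbsq : b^2 = 1 - a^2 := Real.sq_sqrt (by nlinarith)
  -- the box is inside the ball
  have hsub : {y : Euc (m+1) | y 0 ∈ Set.Icc (-a) a ∧ (fun i => y (Fin.succ i)) ∈ piBall m b}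
      ⊆ Metric.closedBall (0 : Euc (m+1)) 1 := by
    intro y ⟨⟨h1, h2⟩, h3⟩
    simp only [Metric.mem_closedBall, dist_zero_right]
    have hn := euc_norm_sq m y
    simp only [piBall, Set.mem_setOf_eq] at h3
    nlinarith [norm_nonneg y, sq_nonneg (y 0), sq_nonneg (‖y‖ - 1)]
  have hvol : volume {y : Euc (m+1) | y 0 ∈ Set.Icc (-a) a ∧ (fun i => y (Fin.succ i)) ∈ piBall m b}
      = ENNReal.ofReal (2*a) * (ENNReal.ofReal (b^m) * volume (Metric.closedBall (0 : Euc m) 1)) := by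
    rw [euc_prod_volume m _ _ measurableSet_Icc (piBall_measurable m b),
      Real.volume_Icc, volume_piBall m hb0,
      Measure.addHaar_closedBall' _ _ hb0, finrank_euclideanSpace_fin]
    ring_nf
  -- b^m ≥ 1/2
  have hbm : (1/2 : ℝ) ≤ b^m := by
    have h4 : (1/4 : ℝ) ≤ (b^m)^2 := by
      rw [← pow_mul, mul_comm, pow_mul, hbsq, haa]
      exact aux_pow m
    nlinarith [pow_nonneg hb0 m]
  calc ENNReal.ofReal a * volume (Metric.closedBall (0 : Euc m) 1)
      ≤ ENNReal.ofReal (2*a) * (ENNReal.ofReal (b^m) * volume (Metric.closedBall (0 : Euc m) 1)) := by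
        rw [← mul_assoc, ← ENNReal.ofReal_mul (by positivity)]
        apply mul_le_mul_left
        apply ENNReal.ofReal_le_ofReal
        nlinarith
    _ = volume {y : Euc (m+1) | y 0 ∈ Set.Icc (-a) a ∧ (fun i => y (Fin.succ i)) ∈ piBall m b} :=
        hvol.symm
    _ ≤ volume (Metric.closedBall (0 : Euc (m+1)) 1) := measure_mono hsub

lemma half_bound (m : ℕ) :
    volume (Metric.closedBall (0 : Euc (m+1)) 1)
      ≤ 2 * volume {y : Euc (m+1) | ‖y‖ ≤ 1 ∧ 0 ≤ y 0} := by
  set A := {y : Euc (m+1) | ‖y‖ ≤ 1 ∧ 0 ≤ y 0} with hA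
  have hneg : volume {y : Euc (m+1) | ‖y‖ ≤ 1 ∧ y 0 ≤ 0} = volume A := by
    have hset : {y : Euc (m+1) | ‖y‖ ≤ 1 ∧ y 0 ≤ 0} = (-1 : ℝ) • A := by
      ext y
      simp only [hA, Set.mem_smul_set, Set.mem_setOf_eq]
      constructor
      · intro ⟨h1, h2⟩
        exact ⟨-y, ⟨by simpa using h1, by simpa using h2⟩, by simp⟩
      · rintro ⟨z, ⟨h1, h2⟩, rfl⟩
        refine ⟨by simpa using h1, ?_⟩
        simp only [neg_smul, one_smul]
        simpa using h2
    rw [hset, Measure.addHaar_smul, finrank_euclideanSpace_fin]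
    simp
  calc volume (Metric.closedBall (0 : Euc (m+1)) 1)
      ≤ volume (A ∪ {y : Euc (m+1) | ‖y‖ ≤ 1 ∧ y 0 ≤ 0}) := by
        apply measure_mono
        intro y hy
        simp only [Metric.mem_closedBall, dist_zero_right] at hy
        rcases le_total 0 (y 0) with h | h
        · exact Or.inl ⟨hy, h⟩
        · exact Or.inr ⟨hy, h⟩
    _ ≤ volume A + volume {y : Euc (m+1) | ‖y‖ ≤ 1 ∧ y 0 ≤ 0} := measure_union_le _ _
    _ = 2 * volume A := by rw [hneg, two_mul]

lemma cap_bound (m : ℕ) {u : ℝ} (hu : 0 ≤ u)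
    (hu' : u * (4 * Real.sqrt (m+1)) ≤ 1) :
    volume (Metric.closedBall (0 : Euc (m+1)) 1)
      ≤ 4 * volume {y : Euc (m+1) | ‖y‖ ≤ 1 ∧ u ≤ y 0} := by
  set C := volume (Metric.closedBall (0 : Euc (m+1)) 1) with hC
  set X := volume {y : Euc (m+1) | ‖y‖ ≤ 1 ∧ u ≤ y 0} with hX
  set S := volume {y : Euc (m+1) | ‖y‖ ≤ 1 ∧ 0 ≤ y 0 ∧ y 0 ≤ u} with hS
  have hCne : C ≠ ⊤ := (measure_closedBall_lt_top).ne
  have h4S : 4 * S ≤ C := by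
    calc 4 * S ≤ 4 * (ENNReal.ofReal u * volume (Metric.closedBall (0 : Euc m) 1)) := by
          exact mul_le_mul_right (slab_bound m hu) 4
      _ = ENNReal.ofReal (4 * u) * volume (Metric.closedBall (0 : Euc m) 1) := by
          rw [ENNReal.ofReal_mul (by norm_num)]
          rw [show ENNReal.ofReal (4:ℝ) = 4 by norm_num]
          ring
      _ ≤ ENNReal.ofReal (1 / Real.sqrt (m+1)) * volume (Metric.closedBall (0 : Euc m) 1) := by
          apply mul_le_mul_left
          apply ENNReal.ofReal_le_ofReal
          have hsq : (0:ℝ) < Real.sqrt (m+1) := Real.sqrt_pos.2 (by positivity)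
          rw [le_div_iff₀ hsq]
          nlinarith
      _ ≤ C := ball_ratio m
  have hsplit : volume {y : Euc (m+1) | ‖y‖ ≤ 1 ∧ 0 ≤ y 0} ≤ X + S := by
    calc volume {y : Euc (m+1) | ‖y‖ ≤ 1 ∧ 0 ≤ y 0}
        ≤ volume ({y : Euc (m+1) | ‖y‖ ≤ 1 ∧ u ≤ y 0} ∪ {y : Euc (m+1) | ‖y‖ ≤ 1 ∧ 0 ≤ y 0 ∧ y 0 ≤ u}) := by
          apply measure_mono
          intro y ⟨h1, h2⟩
          rcases le_total u (y 0) with h | h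
          · exact Or.inl ⟨h1, h⟩
          · exact Or.inr ⟨h1, h2, h⟩
      _ ≤ X + S := measure_union_le _ _
  have key : C + C ≤ 4 * X + C := by
    calc C + C = 2 * C := (two_mul C).symm
      _ ≤ 2 * (2 * volume {y : Euc (m+1) | ‖y‖ ≤ 1 ∧ 0 ≤ y 0}) :=
          mul_le_mul_right (half_bound m) 2
      _ ≤ 2 * (2 * (X + S)) := by
          apply mul_le_mul_right
          exact mul_le_mul_right hsplit 2
      _ = 4 * X + 4 * S := by ring
      _ ≤ 4 * X + C := add_le_add_right h4S _
  exact (ENNReal.add_le_add_iff_right hCne).1 key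

lemma cap_measurable (m : ℕ) (t h : ℝ) (θ : Euc (m+1)) :
    MeasurableSet {y : Euc (m+1) | ‖y‖ ≤ t ∧ h ≤ (inner ℝ θ y : ℝ)} := by
  have hc : Continuous fun y : Euc (m+1) => (inner ℝ θ y : ℝ) :=
    continuous_const.inner continuous_id
  exact ((isClosed_le continuous_norm continuous_const).inter
    (isClosed_le continuous_const hc)).measurableSet

lemma cap_rotate (m : ℕ) (θ : Euc (m+1)) (hθ : ‖θ‖ = 1) (h : ℝ) :
    volume {y : Euc (m+1) | ‖y‖ ≤ 1 ∧ h ≤ (inner ℝ θ y : ℝ)}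
      = volume {y : Euc (m+1) | ‖y‖ ≤ 1 ∧ h ≤ y 0} := by
  set e₀ : Euc (m+1) := EuclideanSpace.single (0 : Fin (m+1)) (1:ℝ) with he₀
  have hne : ‖e₀‖ = 1 := by
    rw [he₀, EuclideanSpace.norm_single]; norm_num
  set T := Submodule.reflection (ℝ ∙ (θ - e₀))ᗮ with hT
  have hTθ : T θ = e₀ := Submodule.reflection_sub (by rw [hθ, hne])
  have hpre : {y : Euc (m+1) | ‖y‖ ≤ 1 ∧ h ≤ (inner ℝ θ y : ℝ)}
      = T ⁻¹' {y : Euc (m+1) | ‖y‖ ≤ 1 ∧ h ≤ y 0} := by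
    ext y
    simp only [Set.mem_preimage, Set.mem_setOf_eq]
    have hn : ‖T y‖ = ‖y‖ := T.norm_map y
    have hi : (T y) 0 = (inner ℝ θ y : ℝ) := by
      have h1 : ((T y) 0 : ℝ) = (inner ℝ e₀ (T y) : ℝ) := by
        rw [he₀, EuclideanSpace.inner_single_left]
        simp
      rw [h1, ← hTθ]
      exact (T.inner_map_map θ y)
    rw [hn, hi]
  have hms : MeasurableSet {y : Euc (m+1) | ‖y‖ ≤ 1 ∧ h ≤ y 0} := by
    have hset : {y : Euc (m+1) | ‖y‖ ≤ 1 ∧ h ≤ y 0}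
        = {y : Euc (m+1) | ‖y‖ ≤ 1 ∧ h ≤ (inner ℝ e₀ y : ℝ)} := by
      ext y
      rw [he₀]
      simp [EuclideanSpace.inner_single_left]
    rw [hset]
    exact cap_measurable m 1 h e₀
  rw [hpre, (T.measurePreserving).measure_preimage hms.nullMeasurableSet]

lemma cap_scale (m : ℕ) {t : ℝ} (ht : 0 < t) (h : ℝ) (θ : Euc (m+1)) :
    volume {y : Euc (m+1) | ‖y‖ ≤ t ∧ h ≤ (inner ℝ θ y : ℝ)}
      = ENNReal.ofReal (t^(m+1))
        * volume {y : Euc (m+1) | ‖y‖ ≤ 1 ∧ h/t ≤ (inner ℝ θ y : ℝ)} := by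
  have hset : {y : Euc (m+1) | ‖y‖ ≤ t ∧ h ≤ (inner ℝ θ y : ℝ)}
      = t • {y : Euc (m+1) | ‖y‖ ≤ 1 ∧ h/t ≤ (inner ℝ θ y : ℝ)} := by
    ext y
    simp only [Set.mem_smul_set, Set.mem_setOf_eq]
    constructor
    · intro ⟨h1, h2⟩
      refine ⟨t⁻¹ • y, ⟨?_, ?_⟩, by simp [smul_smul, ht.ne']⟩
      · rw [norm_smul]
        simp only [norm_inv, Real.norm_eq_abs, abs_of_pos ht]
        rw [inv_mul_le_iff₀ ht, mul_one]
        exact h1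
      · rw [real_inner_smul_right, inv_mul_eq_div]
        gcongr
    · rintro ⟨z, ⟨h1, h2⟩, rfl⟩
      constructor
      · rw [norm_smul]
        simp only [Real.norm_eq_abs, abs_of_pos ht]
        calc t * ‖z‖ ≤ t * 1 := by
              exact mul_le_mul_of_nonneg_left h1 ht.le
          _ = t := mul_one t
      · rw [real_inner_smul_right]
        rw [div_le_iff₀ ht] at h2
        linarith
  rw [hset, Measure.addHaar_smul_of_nonneg _ ht.le, finrank_euclideanSpace_fin]

lemma aux_sqrt_pow (n : ℕ) {δ : ℝ} (hδ0 : 0 ≤ δ) (hδ1 : δ ≤ 1) :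
    (Real.sqrt (1-δ))^n ≤ Real.exp (-(δ*n)/2) := by
  have h1 : Real.sqrt (1-δ) ≤ Real.exp (-δ/2) := by
    calc Real.sqrt (1-δ) ≤ Real.sqrt ((1-δ/2)^2) := by
          apply Real.sqrt_le_sqrt; nlinarith
      _ = 1 - δ/2 := Real.sqrt_sq (by linarith)
      _ ≤ Real.exp (-δ/2) := by
          have := Real.add_one_le_exp (-δ/2)
          linarith
  calc (Real.sqrt (1-δ))^n ≤ (Real.exp (-δ/2))^n :=
        pow_le_pow_left₀ (Real.sqrt_nonneg _) h1 n
    _ = Real.exp (-(δ*n)/2) := by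
        rw [← Real.exp_nat_mul]; ring_nf

set_option maxHeartbeats 2000000 in
lemma slice_bound (m : ℕ) {ρ : ℝ} (hρ0 : 0 < ρ) (hρ1 : ρ < 1) (x : Euc (m+1))
    (hx1 : ‖x‖ ≤ 1) (hx2 : 1 - ρ/(8*Real.sqrt (m+1)) ≤ ‖x‖^2) :
    ENNReal.ofReal ((1 - Real.exp (-(1:ℝ)/16))/4 * ρ^(m+1))
        * volume (Metric.closedBall (0 : Euc (m+1)) 1)
      ≤ volume {y : Euc (m+1) | ‖y‖ ≤ ρ ∧ Real.sqrt (1+ρ^2) < ‖x + y‖} := by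
  set sq := Real.sqrt (m+1) with hsq
  have hsq1 : 1 ≤ sq := by
    have h := Real.sq_sqrt (show (0:ℝ) ≤ (m:ℝ)+1 by positivity)
    rw [← hsq] at h
    nlinarith [Real.sqrt_nonneg ((m:ℝ)+1)]
  have hsq0 : 0 < sq := by linarith
  set s := ρ/(8*sq) with hs
  set w := ρ^2/(8*sq) with hw
  have hs0 : 0 < s := by positivity
  have hw0 : 0 < w := by positivity
  have hs18 : s ≤ 1/8 := by
    rw [hs, div_le_iff₀ (by positivity)]
    nlinarith
  have hw18 : w ≤ 1/8 := by
    rw [hw, div_le_iff₀ (by positivity)]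
    nlinarith
  set h := s + w with hh
  have hh0 : 0 < h := by positivity
  set r := ‖x‖ with hr
  have hr2 : 1 - s ≤ r^2 := hx2
  have hrpos : (0:ℝ) < r := by nlinarith [norm_nonneg x, hr2, hs18]
  have hr12 : (1:ℝ)/2 ≤ r := by nlinarith
  set θ : Euc (m+1) := r⁻¹ • x with hθ
  have hθ1 : ‖θ‖ = 1 := norm_smul_inv_norm (by
    intro h0
    have : r = 0 := by rw [hr, h0]; simp
    linarith)
  have hinner : ∀ y : Euc (m+1), (inner ℝ x y : ℝ) = r * (inner ℝ θ y : ℝ) := by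
    intro y
    rw [hθ, real_inner_smul_left]
    field_simp
  set ρ' := ρ * Real.sqrt (1 - 1/(8*sq)) with hρ'
  have hδ1 : (1:ℝ)/(8*sq) ≤ 1/8 := by
    rw [div_le_div_iff₀ (by positivity) (by norm_num)]
    nlinarith
  have hδ0 : 0 < (1:ℝ)/(8*sq) := by positivity
  have hρ'0 : 0 < ρ' := by
    apply mul_pos hρ0
    apply Real.sqrt_pos.2
    linarith
  have hρ'ρ : ρ' < ρ := by
    rw [hρ']
    have : Real.sqrt (1 - 1/(8*sq)) < 1 := by
      nlinarith [Real.sq_sqrt (show (0:ℝ) ≤ 1 - 1/(8*sq) by linarith),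
        Real.sqrt_nonneg (1 - 1/(8*sq))]
    nlinarith
  have hρ'sq : ρ'^2 = ρ^2 - w := by
    rw [hρ', mul_pow, Real.sq_sqrt (by linarith)]
    rw [hw]
    field_simp
  -- the exponential bound on (ρ'/ρ)^n
  have hshrink : ρ'^(m+1) ≤ Real.exp (-(1:ℝ)/16) * ρ^(m+1) := by
    have h1 : ρ'^(m+1) = ρ^(m+1) * (Real.sqrt (1 - 1/(8*sq)))^(m+1) := by
      rw [hρ', mul_pow]
    rw [h1]
    have h2 : (Real.sqrt (1 - 1/(8*sq)))^(m+1) ≤ Real.exp (-((1/(8*sq))*((m+1:ℕ):ℝ))/2) :=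
      aux_sqrt_pow (m+1) hδ0.le (by linarith)
    have h3 : Real.exp (-((1/(8*sq))*((m+1:ℕ):ℝ))/2) ≤ Real.exp (-(1:ℝ)/16) := by
      apply Real.exp_le_exp.2
      have hnsq : ((m+1:ℕ):ℝ) = sq^2 := by
        rw [hsq, Real.sq_sqrt (by positivity)]
        push_cast; ring
      have key : (1/(8*sq))*((m+1:ℕ):ℝ)/2 = sq/16 := by
        rw [hnsq]; field_simp; ring
      have key2 : -((1/(8*sq))*((m+1:ℕ):ℝ))/2 = -(sq/16) := by
        rw [← key]; ring
      rw [key2]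
      linarith
    calc ρ^(m+1) * (Real.sqrt (1 - 1/(8*sq)))^(m+1) ≤ ρ^(m+1) * Real.exp (-((1/(8*sq))*((m+1:ℕ):ℝ))/2) := by
          apply mul_le_mul_of_nonneg_left h2 (by positivity)
      _ ≤ ρ^(m+1) * Real.exp (-(1:ℝ)/16) := by
          apply mul_le_mul_of_nonneg_left h3 (by positivity)
      _ = Real.exp (-(1:ℝ)/16) * ρ^(m+1) := by ring
  -- sets
  set A := {y : Euc (m+1) | ‖y‖ ≤ ρ ∧ h ≤ (inner ℝ θ y : ℝ)} with hA
  set A' := {y : Euc (m+1) | ‖y‖ ≤ ρ' ∧ h ≤ (inner ℝ θ y : ℝ)} with hA'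
  set K := A \ Metric.closedBall (0 : Euc (m+1)) ρ' with hK
  -- K is contained in the target set
  have hKsub : K ⊆ {y : Euc (m+1) | ‖y‖ ≤ ρ ∧ Real.sqrt (1+ρ^2) < ‖x + y‖} := by
    rintro y ⟨⟨hy1, hy2⟩, hy3⟩
    simp only [Metric.mem_closedBall, dist_zero_right, not_le] at hy3
    refine ⟨hy1, ?_⟩
    have hxy : (inner ℝ x y : ℝ) = r * (inner ℝ θ y : ℝ) := hinner y
    have hexp : ‖x + y‖^2 = r^2 + 2*(inner ℝ x y : ℝ) + ‖y‖^2 := by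
      rw [norm_add_sq_real, hr]
    have hy2' : ‖y‖^2 > ρ^2 - w := by
      rw [← hρ'sq]
      nlinarith [hρ'0]
    have hiq : h ≤ 2*r*(inner ℝ θ y : ℝ) := by
      have hnn : 0 ≤ (2*r - 1) * (inner ℝ θ y : ℝ) :=
        mul_nonneg (by linarith) (by linarith)
      nlinarith
    have hgt : 1 + ρ^2 < ‖x + y‖^2 := by
      rw [hexp, hxy]
      linarith [hiq, hy2', hr2]
    have h0 : 0 < ‖x+y‖ := by
      by_contra hcon
      push_neg at hcon
      have : ‖x+y‖ = 0 := le_antisymm hcon (norm_nonneg _)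
      rw [this] at hgt
      nlinarith
    rw [show Real.sqrt (1+ρ^2) < ‖x+y‖ ↔ 1+ρ^2 < ‖x+y‖^2 from ?_]
    · exact hgt
    · constructor
      · intro hlt
        calc 1+ρ^2 = Real.sqrt (1+ρ^2)^2 := (Real.sq_sqrt (by positivity)).symm
          _ < ‖x+y‖^2 := by
              apply pow_lt_pow_left₀ hlt (Real.sqrt_nonneg _)
              norm_num
      · intro hlt
        nlinarith [Real.sqrt_nonneg (1+ρ^2), Real.sq_sqrt (show (0:ℝ) ≤ 1+ρ^2 by positivity),
          norm_nonneg (x+y)]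
  -- cap volumes
  set V := volume {y : Euc (m+1) | ‖y‖ ≤ 1 ∧ h/ρ ≤ (inner ℝ θ y : ℝ)} with hV
  have hVfin : V ≠ ⊤ := by
    apply ne_of_lt
    calc V ≤ volume (Metric.closedBall (0 : Euc (m+1)) 1) := by
          apply measure_mono
          intro y ⟨h1, _⟩
          simpa [Metric.mem_closedBall, dist_zero_right] using h1
      _ < ⊤ := measure_closedBall_lt_top
  have hvolA : volume A = ENNReal.ofReal (ρ^(m+1)) * V := cap_scale m hρ0 h θ
  have hvolA' : volume A' ≤ ENNReal.ofReal (ρ'^(m+1)) * V := by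
    rw [show volume A' = ENNReal.ofReal (ρ'^(m+1))
        * volume {y : Euc (m+1) | ‖y‖ ≤ 1 ∧ h/ρ' ≤ (inner ℝ θ y : ℝ)} from cap_scale m hρ'0 h θ]
    apply mul_le_mul_right
    apply measure_mono
    intro y ⟨h1, h2⟩
    refine ⟨h1, le_trans ?_ h2⟩
    apply div_le_div_of_nonneg_left hh0.le hρ'0 hρ'ρ.le
  -- the main cap lower bound : C ≤ 4V
  have hCV : volume (Metric.closedBall (0 : Euc (m+1)) 1) ≤ 4 * V := by
    rw [hV, cap_rotate m θ hθ1]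
    apply cap_bound m (by positivity)
    -- (h/ρ) * (4 * sqrt (m+1)) ≤ 1
    rw [← hsq]
    have hhρ : h/ρ = (1+ρ)/(8*sq) := by
      rw [hh, hs, hw]
      field_simp
    rw [hhρ]
    rw [div_mul_eq_mul_div, div_le_one (by positivity)]
    nlinarith
  -- combine : ofReal(c₂ ρ^(m+1)) * C + vol A' ≤ vol A
  have hsum : ENNReal.ofReal ((1 - Real.exp (-(1:ℝ)/16))/4 * ρ^(m+1))
        * volume (Metric.closedBall (0 : Euc (m+1)) 1) + volume A' ≤ volume A := by
    have e1 : ENNReal.ofReal ((1 - Real.exp (-(1:ℝ)/16))/4 * ρ^(m+1))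
          * volume (Metric.closedBall (0 : Euc (m+1)) 1)
        ≤ ENNReal.ofReal ((1 - Real.exp (-(1:ℝ)/16)) * ρ^(m+1)) * V := by
      calc ENNReal.ofReal ((1 - Real.exp (-(1:ℝ)/16))/4 * ρ^(m+1))
            * volume (Metric.closedBall (0 : Euc (m+1)) 1)
          ≤ ENNReal.ofReal ((1 - Real.exp (-(1:ℝ)/16))/4 * ρ^(m+1)) * (4 * V) :=
            mul_le_mul_right hCV _
        _ = ENNReal.ofReal ((1 - Real.exp (-(1:ℝ)/16))/4 * ρ^(m+1)) * ENNReal.ofReal 4 * V := by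
            rw [show ENNReal.ofReal (4:ℝ) = 4 by norm_num]; ring
        _ = ENNReal.ofReal ((1 - Real.exp (-(1:ℝ)/16)) * ρ^(m+1)) * V := by
            have hq : Real.exp (-(1:ℝ)/16) < 1 := by
              rw [Real.exp_lt_one_iff]; norm_num
            rw [← ENNReal.ofReal_mul (by nlinarith [pow_pos hρ0 (m+1)])]
            congr 2
            ring
    have e2 : volume A' ≤ ENNReal.ofReal (Real.exp (-(1:ℝ)/16) * ρ^(m+1)) * V := by
      calc volume A' ≤ ENNReal.ofReal (ρ'^(m+1)) * V := hvolA'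
        _ ≤ ENNReal.ofReal (Real.exp (-(1:ℝ)/16) * ρ^(m+1)) * V := by
            apply mul_le_mul_left
            exact ENNReal.ofReal_le_ofReal hshrink
    calc ENNReal.ofReal ((1 - Real.exp (-(1:ℝ)/16))/4 * ρ^(m+1))
          * volume (Metric.closedBall (0 : Euc (m+1)) 1) + volume A'
        ≤ ENNReal.ofReal ((1 - Real.exp (-(1:ℝ)/16)) * ρ^(m+1)) * V
          + ENNReal.ofReal (Real.exp (-(1:ℝ)/16) * ρ^(m+1)) * V := add_le_add e1 e2
      _ = (ENNReal.ofReal ((1 - Real.exp (-(1:ℝ)/16)) * ρ^(m+1))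
          + ENNReal.ofReal (Real.exp (-(1:ℝ)/16) * ρ^(m+1))) * V := by ring
      _ = ENNReal.ofReal (ρ^(m+1)) * V := by
          have hq : Real.exp (-(1:ℝ)/16) < 1 := by
            rw [Real.exp_lt_one_iff]; norm_num
          rw [← ENNReal.ofReal_add (by nlinarith [pow_pos hρ0 (m+1)]) (by positivity)]
          congr 1
          ring
      _ = volume A := hvolA.symm
  -- subadditivity : vol A ≤ vol K + vol A'
  have hsplit : volume A ≤ volume K + volume A' := by
    calc volume A ≤ volume (K ∪ A') := by
          apply measure_mono
          intro y hy
          by_cases hc : y ∈ Metric.closedBall (0 : Euc (m+1)) ρ'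
          · right
            simp only [Metric.mem_closedBall, dist_zero_right] at hc
            exact ⟨hc, hy.2⟩
          · left
            exact ⟨hy, hc⟩
      _ ≤ volume K + volume A' := measure_union_le _ _
  have hA'fin : volume A' ≠ ⊤ := by
    apply ne_of_lt
    calc volume A' ≤ volume (Metric.closedBall (0 : Euc (m+1)) ρ') := by
          apply measure_mono
          intro y ⟨h1, _⟩
          simpa [Metric.mem_closedBall, dist_zero_right] using h1
      _ < ⊤ := measure_closedBall_lt_top
  have hfinal : ENNReal.ofReal ((1 - Real.exp (-(1:ℝ)/16))/4 * ρ^(m+1))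
      * volume (Metric.closedBall (0 : Euc (m+1)) 1) ≤ volume K := by
    have h1 := le_trans hsum hsplit
    exact (ENNReal.add_le_add_iff_right hA'fin).1 h1
  calc ENNReal.ofReal ((1 - Real.exp (-(1:ℝ)/16))/4 * ρ^(m+1))
        * volume (Metric.closedBall (0 : Euc (m+1)) 1)
      ≤ volume K := hfinal
    _ ≤ volume {y : Euc (m+1) | ‖y‖ ≤ ρ ∧ Real.sqrt (1+ρ^2) < ‖x + y‖} :=
        measure_mono hKsub


lemma exp_min_aux {t : ℝ} (ht : 0 < t) :
    (1 - Real.exp (-(1:ℝ)/16)) * min t 1 ≤ 1 - Real.exp (-t/16) := by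
  rcases le_total 1 t with h | h
  · rw [min_eq_right h]
    have : Real.exp (-t/16) ≤ Real.exp (-(1:ℝ)/16) := by
      apply Real.exp_le_exp.2
      linarith
    linarith
  · rw [min_eq_left h]
    have hconv := convexOn_exp.2 (Set.mem_univ (0:ℝ)) (Set.mem_univ (-(1:ℝ)/16))
      (by linarith : (0:ℝ) ≤ 1 - t) (by linarith : (0:ℝ) ≤ t) (by ring)
    simp only [smul_eq_mul, mul_zero, zero_add, Real.exp_zero, mul_one] at hconv
    have heq : Real.exp (t * (-(1:ℝ)/16)) = Real.exp (-t/16) := by ring_nf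
    rw [heq] at hconv
    nlinarith [hconv]

lemma shell_bound (m : ℕ) {ρ : ℝ} (hρ0 : 0 < ρ) (hρ1 : ρ < 1) :
    ENNReal.ofReal ((1 - Real.exp (-(1:ℝ)/16)) * min (ρ * Real.sqrt (m+1)) 1)
        * volume (Metric.closedBall (0 : Euc (m+1)) 1)
      ≤ volume (Metric.closedBall (0 : Euc (m+1)) 1
          \ Metric.ball (0 : Euc (m+1)) (Real.sqrt (1 - ρ/(8*Real.sqrt (m+1))))) := by
  set sq := Real.sqrt (m+1) with hsq
  have hsq1 : 1 ≤ sq := by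
    have h := Real.sq_sqrt (show (0:ℝ) ≤ (m:ℝ)+1 by positivity)
    rw [← hsq] at h
    nlinarith [Real.sqrt_nonneg ((m:ℝ)+1)]
  set s := ρ/(8*sq) with hs
  have hs0 : 0 < s := by positivity
  have hs18 : s ≤ 1/8 := by
    rw [hs, div_le_iff₀ (by positivity)]
    nlinarith
  set a := Real.sqrt (1 - s) with ha
  have ha0 : 0 ≤ a := Real.sqrt_nonneg _
  have ha1 : a ≤ 1 := by
    rw [ha]
    nlinarith [Real.sq_sqrt (show (0:ℝ) ≤ 1 - s by linarith), Real.sqrt_nonneg (1-s)]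
  set C := volume (Metric.closedBall (0 : Euc (m+1)) 1) with hC
  have hCfin : C ≠ ⊤ := measure_closedBall_lt_top.ne
  have hball : volume (Metric.ball (0 : Euc (m+1)) a) = ENNReal.ofReal (a^(m+1)) * C := by
    rw [Measure.addHaar_ball _ _ ha0, finrank_euclideanSpace_fin, hC,
      Measure.addHaar_unitClosedBall_eq_addHaar_unitBall]
  have hdiff : volume (Metric.closedBall (0 : Euc (m+1)) 1 \ Metric.ball (0 : Euc (m+1)) a)
      = C - ENNReal.ofReal (a^(m+1)) * C := by
    rw [← hball, hC]
    apply measure_diff (Metric.ball_subset_closedBall.trans (Metric.closedBall_subset_closedBall ha1))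
      measurableSet_ball.nullMeasurableSet
    exact measure_ball_lt_top.ne
  rw [hdiff]
  apply ENNReal.le_sub_of_add_le_right
  · exact ENNReal.mul_ne_top ENNReal.ofReal_ne_top hCfin
  have hsq0 : 0 < sq := by linarith
  have hapow : a^(m+1) ≤ Real.exp (-(ρ*sq)/16) := by
    have h1 : a^(m+1) ≤ Real.exp (-(s*((m+1:ℕ):ℝ))/2) :=
      aux_sqrt_pow (m+1) hs0.le (by linarith)
    have hnsq : ((m+1:ℕ):ℝ) = sq^2 := by
      rw [hsq, show (((m+1:ℕ)):ℝ) = (m:ℝ)+1 by push_cast; ring,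
        Real.sq_sqrt (by positivity)]
    have h2 : (-(s*((m+1:ℕ):ℝ))/2 : ℝ) = -(ρ*sq)/16 := by
      rw [hnsq, hs]
      field_simp
      ring
    rw [← h2]
    exact h1
  calc ENNReal.ofReal ((1 - Real.exp (-(1:ℝ)/16)) * min (ρ * sq) 1) * C
        + ENNReal.ofReal (a^(m+1)) * C
      = ENNReal.ofReal ((1 - Real.exp (-(1:ℝ)/16)) * min (ρ * sq) 1 + a^(m+1)) * C := by
        rw [ENNReal.ofReal_add ?h1 (by positivity)]
        · ring
        case h1 =>
          have hq : Real.exp (-(1:ℝ)/16) < 1 := by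
            rw [Real.exp_lt_one_iff]; norm_num
          have : (0:ℝ) ≤ min (ρ*sq) 1 := le_min (by positivity) (by norm_num)
          nlinarith
    _ ≤ 1 * C := by
        apply mul_le_mul_left
        rw [show (1 : ℝ≥0∞) = ENNReal.ofReal 1 by simp]
        apply ENNReal.ofReal_le_ofReal
        have hmin := exp_min_aux (show 0 < ρ*sq by positivity)
        linarith
    _ = C := one_mul C

theorem volume_theta_upper_bound :
    ∃ c : ℝ, 0 < c ∧
      ∀ (ρ : ℝ), ρ ∈ Set.Ioo (0 : ℝ) 1 →
      ∀ (n : ℕ), 0 < n →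
        volume {p : EuclideanSpace ℝ (Fin n) × EuclideanSpace ℝ (Fin n) |
            ‖p.1‖ ≤ 1 ∧ ‖p.2‖ ≤ ρ ∧ ‖p.1 + p.2‖ ≤ Real.sqrt (1 + ρ ^ 2)}
          ≤ ENNReal.ofReal (1 - c * min (ρ * Real.sqrt n) 1) *
            (volume (Metric.closedBall (0 : EuclideanSpace ℝ (Fin n)) 1) *
              volume (Metric.closedBall (0 : EuclideanSpace ℝ (Fin n)) ρ)) := by
  have hq1 : Real.exp (-(1:ℝ)/16) < 1 := by
    rw [Real.exp_lt_one_iff]; norm_num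
  have hq0 : 0 < Real.exp (-(1:ℝ)/16) := Real.exp_pos _
  set q := Real.exp (-(1:ℝ)/16) with hqdef
  refine ⟨(1-q)^2/4, by nlinarith, ?_⟩
  rintro ρ ⟨hρ0, hρ1⟩ n hn
  obtain ⟨m, rfl⟩ : ∃ m, n = m+1 := ⟨n-1, (Nat.succ_pred_eq_of_pos hn).symm⟩
  have hcast : ((m+1:ℕ):ℝ) = (m:ℝ)+1 := by push_cast; ring
  set c := (1-q)^2/4 with hcdef
  set sq := Real.sqrt ((m:ℝ)+1) with hsqdef
  have hsq1 : 1 ≤ sq := by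
    have h := Real.sq_sqrt (show (0:ℝ) ≤ (m:ℝ)+1 by positivity)
    rw [← hsqdef] at h
    nlinarith [Real.sqrt_nonneg ((m:ℝ)+1)]
  set mn := min (ρ * sq) 1 with hmndef
  have hmn0 : 0 ≤ mn := le_min (by positivity) (by norm_num)
  have hmn1 : mn ≤ 1 := min_le_right _ _
  set C := volume (Metric.closedBall (0 : Euc (m+1)) 1) with hCdef
  set Cρ := volume (Metric.closedBall (0 : Euc (m+1)) ρ) with hCρdef
  have hCfin : C ≠ ⊤ := measure_closedBall_lt_top.ne
  have hCρfin : Cρ ≠ ⊤ := measure_closedBall_lt_top.ne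
  have hCρ : Cρ = ENNReal.ofReal (ρ^(m+1)) * C := by
    rw [hCρdef, Measure.addHaar_closedBall' _ _ hρ0.le, finrank_euclideanSpace_fin]
  -- the shell
  set a := Real.sqrt (1 - ρ/(8*sq)) with hadef
  set S := Metric.closedBall (0 : Euc (m+1)) 1 \ Metric.ball (0 : Euc (m+1)) a with hSdef
  have hSm : MeasurableSet S := measurableSet_closedBall.diff measurableSet_ball
  -- the good set
  set Θ := {p : Euc (m+1) × Euc (m+1) |
      ‖p.1‖ ≤ 1 ∧ ‖p.2‖ ≤ ρ ∧ ‖p.1 + p.2‖ ≤ Real.sqrt (1 + ρ ^ 2)} with hΘdef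
  set G := {p : Euc (m+1) × Euc (m+1) |
      p.1 ∈ S ∧ ‖p.2‖ ≤ ρ ∧ Real.sqrt (1 + ρ ^ 2) < ‖p.1 + p.2‖} with hGdef
  have hGm : MeasurableSet G := by
    apply MeasurableSet.inter (hSm.preimage measurable_fst)
    apply MeasurableSet.inter
    · exact measurableSet_le (continuous_snd.norm).measurable measurable_const
    · exact measurableSet_lt measurable_const ((continuous_fst.add continuous_snd).norm).measurable
  have hdisj : Disjoint Θ G := by
    rw [Set.disjoint_left]
    rintro p ⟨_, _, h1⟩ ⟨_, _, h2⟩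
    exact absurd h1 (not_le.2 h2)
  have hsub : Θ ∪ G ⊆ (Metric.closedBall (0 : Euc (m+1)) 1) ×ˢ (Metric.closedBall (0 : Euc (m+1)) ρ) := by
    rintro p (⟨h1, h2, _⟩ | ⟨h1, h2, _⟩)
    · exact ⟨by simpa [Metric.mem_closedBall, dist_zero_right] using h1,
        by simpa [Metric.mem_closedBall, dist_zero_right] using h2⟩
    · exact ⟨h1.1, by simpa [Metric.mem_closedBall, dist_zero_right] using h2⟩
  have hM : volume ((Metric.closedBall (0 : Euc (m+1)) 1) ×ˢ (Metric.closedBall (0 : Euc (m+1)) ρ))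
      = C * Cρ := by
    rw [Measure.volume_eq_prod, Measure.prod_prod]
  have hsumM : volume Θ + volume G ≤ C * Cρ := by
    rw [← measure_union hdisj hGm]
    exact (measure_mono hsub).trans (le_of_eq hM)
  -- Fubini lower bound for G
  set β := ENNReal.ofReal ((1 - q)/4 * ρ^(m+1)) * C with hβdef
  have hslice : ∀ x, x ∈ S → β ≤ volume (Prod.mk x ⁻¹' G) := by
    intro x hx
    have hx1 : ‖x‖ ≤ 1 := by
      simpa [Metric.mem_closedBall, dist_zero_right] using hx.1
    have hx2 : 1 - ρ/(8*sq) ≤ ‖x‖^2 := by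
      have hxa : a ≤ ‖x‖ := by
        have := hx.2
        simp only [Metric.mem_ball, dist_zero_right, not_lt] at this
        exact this
      rcases le_or_gt (1 - ρ/(8*sq)) 0 with hcase | hcase
      · nlinarith [norm_nonneg x]
      · have h2 := Real.sq_sqrt hcase.le
        nlinarith [Real.sqrt_nonneg (1 - ρ/(8*sq)), norm_nonneg x]
    have hpre : Prod.mk x ⁻¹' G
        = {y : Euc (m+1) | ‖y‖ ≤ ρ ∧ Real.sqrt (1 + ρ^2) < ‖x + y‖} := by
      ext y
      simp only [hGdef, Set.mem_preimage, Set.mem_setOf_eq]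
      tauto
    rw [hpre]
    exact slice_bound m hρ0 hρ1 x hx1 hx2
  have hfub : volume G = ∫⁻ x, volume (Prod.mk x ⁻¹' G) := by
    rw [Measure.volume_eq_prod, Measure.prod_apply hGm]
  have hGlb : β * volume S ≤ volume G := by
    rw [hfub]
    calc β * volume S = ∫⁻ x, S.indicator (fun _ => β) x :=
          (lintegral_indicator_const hSm β).symm
      _ ≤ ∫⁻ x, volume (Prod.mk x ⁻¹' G) := by
          apply lintegral_mono
          intro x
          by_cases hx : x ∈ S
          · rw [Set.indicator_of_mem hx]
            exact hslice x hx
          · rw [Set.indicator_of_notMem hx]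
            exact zero_le
  have hshell : ENNReal.ofReal ((1-q) * mn) * C ≤ volume S := shell_bound m hρ0 hρ1
  have hGfinal : ENNReal.ofReal (c * mn) * (C * Cρ) ≤ volume G := by
    have e : ENNReal.ofReal (c*mn) * ENNReal.ofReal (ρ^(m+1))
        = ENNReal.ofReal ((1-q)/4 * ρ^(m+1)) * ENNReal.ofReal ((1-q)*mn) := by
      rw [← ENNReal.ofReal_mul (mul_nonneg (by positivity) hmn0),
        ← ENNReal.ofReal_mul (mul_nonneg (by linarith) (pow_pos hρ0 (m+1)).le)]
      congr 1
      rw [hcdef]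
      ring
    calc ENNReal.ofReal (c * mn) * (C * Cρ)
        = ENNReal.ofReal (c*mn) * ENNReal.ofReal (ρ^(m+1)) * (C*C) := by
          rw [hCρ]; ring
      _ = ENNReal.ofReal ((1-q)/4 * ρ^(m+1)) * ENNReal.ofReal ((1-q)*mn) * (C*C) := by
          rw [e]
      _ = β * (ENNReal.ofReal ((1-q) * mn) * C) := by
          rw [hβdef]; ring
      _ ≤ β * volume S := mul_le_mul_right hshell β
      _ ≤ volume G := hGlb
  -- conclude
  have hGfin : volume G ≠ ⊤ := by
    apply ne_of_lt
    calc volume G ≤ volume Θ + volume G := le_add_self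
      _ ≤ C * Cρ := hsumM
      _ < ⊤ := ENNReal.mul_lt_top (hCfin.lt_top) (hCρfin.lt_top)
  have step1 : volume Θ ≤ C * Cρ - volume G :=
    ENNReal.le_sub_of_add_le_right hGfin hsumM
  have step2 : C * Cρ - volume G ≤ C * Cρ - ENNReal.ofReal (c * mn) * (C * Cρ) :=
    tsub_le_tsub_left hGfinal _
  have hcmn1 : c * mn ≤ 1 := by
    rw [hcdef]
    nlinarith
  have step3 : C * Cρ - ENNReal.ofReal (c * mn) * (C * Cρ)
      ≤ ENNReal.ofReal (1 - c * mn) * (C * Cρ) := by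
    rw [tsub_le_iff_right]
    apply le_of_eq
    calc C * Cρ = ENNReal.ofReal 1 * (C * Cρ) := by
          rw [ENNReal.ofReal_one, one_mul]
      _ = (ENNReal.ofReal (1 - c*mn) + ENNReal.ofReal (c*mn)) * (C * Cρ) := by
          rw [← ENNReal.ofReal_add (by linarith) (by nlinarith)]
          congr 2
          ring
      _ = ENNReal.ofReal (1 - c*mn) * (C * Cρ) + ENNReal.ofReal (c*mn) * (C * Cρ) := by
          ring
  have hfinal := le_trans step1 (le_trans step2 step3)
  rw [show Real.sqrt ((m+1:ℕ):ℝ) = sq by rw [hsqdef, hcast]]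
  exact hfinal
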